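/- Let R be a DGA over A, F a DG right R-module, C_• a free graded A-module with finite basis B (degrees ≥ 0), (m_{x,y}) a twisting cocycle for (R, C_•), and M := R⊗_A C_• the DG left R-module with twisted differential ∂_M(a⊗x) = ∂a⊗x + (−1)^{|a|} Σ_{y∈B} (a m_{x,y})⊗y and left action b·(a⊗x) = (ba)⊗x. Form F ⊗_R M, the quotient of F ⊗_A M by the relations (α·a) ⊗ ξ = α ⊗ (a·ξ), graded by |α⊗ξ| = |α| + |ξ|. Then the map ∂(α⊗ξ) = ∂α⊗ξ + (−1)^{|α|} α⊗∂_M ξ descends to a well-defined degree −1 differential on F ⊗_R M, and the A-linear map C_*(C_•, F) → F ⊗_R M sending α⊗x ↦ α ⊗ (1⊗x) is an isomorphism of chain complexes from the twisted complex onto F ⊗_R M. -/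

import Mathlib

universe u v w t

/-- `(T, τ)` is a balanced tensor product over the ring `R` of the right `R`-module
`(F, actF)` and the left `R`-module `(N, actN)` (actions given as explicit functions):
`τ` is biadditive and balanced, its image generates `T`, and every biadditive balanced map
factors uniquely through `τ` by an additive map. -/
structure IsBalancedTensor (R : Type u) [Ring R]
    (F : Type v) [AddCommGroup F] (actF : F → R → F)
    (N : Type w) [AddCommGroup N] (actN : R → N → N)
    (T : Type t) [AddCommGroup T] (τ : F → N → T) : Prop where
  add_left : ∀ (f g : F) (n : N), τ (f + g) n = τ f n + τ g n
  add_right : ∀ (f : F) (n n' : N), τ f (n + n') = τ f n + τ f n'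
  balanced : ∀ (f : F) (a : R) (n : N), τ (actF f a) n = τ f (actN a n)
  span : AddSubgroup.closure {x : T | ∃ f n, τ f n = x} = ⊤
  lift : ∀ (P : Type (max u v w t)) [AddCommGroup P] (β : F → N → P),
    (∀ (f g : F) (n : N), β (f + g) n = β f n + β g n) →
    (∀ (f : F) (n n' : N), β f (n + n') = β f n + β f n') →
    (∀ (f : F) (a : R) (n : N), β (actF f a) n = β f (actN a n)) →
    ∃! φ : T →+ P, ∀ f n, φ (τ f n) = β f n

/-- Let `m` be a twisting cocycle for `(R, C)` and `M = R ⊗ C` (modelled as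
`B → R`) the semi-free DG left `R`-module with twisted differential `dM` and pointwise left
multiplication, and let `F` be a DG right `R`-module with twisted complex `(B → F, D)`.
If `(T, τ)` is the balanced tensor product `F ⊗_R M`, then the tensor differential
`∂ (α ⊗ ξ) = ∂α ⊗ ξ + (-1)^{|α|} α ⊗ dM ξ` descends to a well-defined degree `-1`
differential `DT` on `T`, and `α ⊗ x ↦ α ⊗ (1 ⊗ x)` defines an isomorphism of chain
complexes from the twisted complex onto `(T, DT)`. -/
theorem statement16
    {A : Type*} [CommRing A] {R : Type*} [Ring R] [Algebra A R]
    (ℛ : ℤ → Submodule A R) [GradedRing ℛ]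
    (d : R →ₗ[A] R)
    (hd_mem : ∀ i : ℤ, ∀ a ∈ ℛ i, d a ∈ ℛ (i - 1))
    (hd_sq : ∀ a : R, d (d a) = 0)
    (hd_leibniz : ∀ i : ℤ, ∀ a ∈ ℛ i, ∀ b : R,
      d (a * b) = d a * b + (Int.negOnePow i : ℤ) • (a * d b))
    {F : Type*} [AddCommGroup F] [Module A F]
    (ℱ : ℤ → Submodule A F) [DirectSum.Decomposition ℱ]
    (dF : F →ₗ[A] F)
    (hdF_mem : ∀ i : ℤ, ∀ f ∈ ℱ i, dF f ∈ ℱ (i - 1))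
    (hdF_sq : ∀ f : F, dF (dF f) = 0)
    (act : F →ₗ[A] R →ₗ[A] F)
    (hact_one : ∀ f : F, act f 1 = f)
    (hact_mul : ∀ (f : F) (a b : R), act (act f a) b = act f (a * b))
    (hact_mem : ∀ (i j : ℤ), ∀ f ∈ ℱ i, ∀ a ∈ ℛ j, act f a ∈ ℱ (i + j))
    (hact_leibniz : ∀ i : ℤ, ∀ f ∈ ℱ i, ∀ a : R,
      dF (act f a) = act (dF f) a + (Int.negOnePow i : ℤ) • act f (d a))
    {B : Type*} [Fintype B] [DecidableEq B]
    (deg : B → ℤ) (hdeg : ∀ x : B, 0 ≤ deg x)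
    (m : B → B → R)
    (hm_mem : ∀ x y : B, m x y ∈ ℛ (deg x - deg y - 1))
    (hm_zero : ∀ x y : B, ¬ deg y < deg x → m x y = 0)
    (hm_mc : ∀ x y : B, d (m x y) =
      ∑ z : B, (Int.negOnePow (deg x - deg z) : ℤ) • (m x z * m z y))
    (dM : (B → R) →ₗ[A] (B → R))
    (hdM : ∀ i : ℤ, ∀ a ∈ ℛ i, ∀ x : B,
      dM (Pi.single x a) = Pi.single x (d a) +
        (Int.negOnePow i : ℤ) • (fun y : B => a * m x y))
    (D : (B → F) →ₗ[A] (B → F))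
    (hD : ∀ i : ℤ, ∀ f ∈ ℱ i, ∀ x : B,
      D (Pi.single x f) = Pi.single x (dF f) +
        (Int.negOnePow i : ℤ) • (fun y : B => act f (m x y)))
    {T : Type*} [AddCommGroup T] (τ : F → (B → R) → T)
    (hT : IsBalancedTensor R F (fun f a => act f a) (B → R)
      (fun (a : R) (c : B → R) (x : B) => a * c x) T τ) :
    ∃ DT : T →+ T,
      (∀ s : T, DT (DT s) = 0) ∧
      (∀ i : ℤ, ∀ f ∈ ℱ i, ∀ c : B → R,
        DT (τ f c) = τ (dF f) c + (Int.negOnePow i : ℤ) • τ f (dM c)) ∧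
      ∃ e : (B → F) ≃+ T,
        (∀ (f : F) (x : B), e (Pi.single x f) = τ f (Pi.single x (1 : R))) ∧
        ∀ c : B → F, e (D c) = DT (e c) := by
    classical
  -- sign bookkeeping
  have hεsq : ∀ k : ℤ, (Int.negOnePow k : ℤ) * (Int.negOnePow k : ℤ) = 1 := by
    intro k; rw [← Units.val_mul, Int.units_mul_self, Units.val_one]
  have hεadd : ∀ k l : ℤ, (Int.negOnePow (k + l) : ℤ)
      = (Int.negOnePow k : ℤ) * (Int.negOnePow l : ℤ) := by
    intro k l; rw [Int.negOnePow_add, Units.val_mul]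
  have hεsub1 : ∀ k : ℤ, (Int.negOnePow (k - 1) : ℤ) = -(Int.negOnePow k : ℤ) := by
    intro k; rw [Int.negOnePow_sub, Int.negOnePow_one]; push_cast; ring
  have hεcancel : ∀ k l : ℤ, (Int.negOnePow k : ℤ) * (Int.negOnePow (k + l) : ℤ)
      = (Int.negOnePow l : ℤ) := by
    intro k l; rw [hεadd, ← mul_assoc, hεsq, one_mul]
  -- zero laws for τ
  have hτ0r : ∀ f : F, τ f 0 = 0 := by
    intro f
    have h := hT.add_right f 0 0
    rw [add_zero] at h
    exact add_eq_left.mp h.symm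
  have hτ0l : ∀ n : B → R, τ 0 n = 0 := by
    intro n
    have h := hT.add_left 0 0 n
    rw [add_zero] at h
    exact add_eq_left.mp h.symm
  -- τ respects sums and ℤ-smul in the right variable
  have hτsum : ∀ (f : F) (g : B → (B → R)), τ f (∑ x : B, g x) = ∑ x : B, τ f (g x) := by
    intro f g
    exact map_sum (AddMonoidHom.mk' (τ f) (hT.add_right f)) g Finset.univ
  have hτzsmul : ∀ (f : F) (k : ℤ) (n : B → R), τ f (k • n) = k • τ f n := by
    intro f k n
    exact map_zsmul (AddMonoidHom.mk' (τ f) (hT.add_right f)) k n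
  have hτaddr : ∀ (f : F) (n n' : B → R), τ f (n + n') = τ f n + τ f n' := hT.add_right
  -- balanced in convenient form
  have hbal : ∀ (f : F) (a : R) (x : B),
      τ (act f a) (Pi.single x (1 : R)) = τ f (Pi.single x a) := by
    intro f a x
    rw [hT.balanced f a (Pi.single x 1)]
    congr 1
    funext y
    by_cases h : y = x <;> simp [Pi.single_apply, h]
  -- the lift φ : T →+ (B → F)
  obtain ⟨φ₀, hφ₀, -⟩ := hT.lift (ULift.{max u_2 u_5} (B → F))
    (fun f a => ULift.up (fun x => act f (a x)))
    (by intro f g n; apply congrArg ULift.up; funext x; simp)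
    (by intro f n n'; apply congrArg ULift.up; funext x; simp)
    (by intro f a n; apply congrArg ULift.up; funext x; exact hact_mul f a (n x))
  set φ : T →+ (B → F) := (AddEquiv.ulift).toAddMonoidHom.comp φ₀ with hφdef
  have hφ : ∀ (f : F) (n : B → R), φ (τ f n) = fun x => act f (n x) := by
    intro f n
    show AddEquiv.ulift (φ₀ (τ f n)) = _
    rw [hφ₀]
    rfl
  -- the map e₀ : (B → F) →+ T
  set e₀ : (B → F) →+ T := AddMonoidHom.mk'
      (fun c => ∑ x : B, τ (c x) (Pi.single x (1 : R)))
      (by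
        intro c c'
        rw [← Finset.sum_add_distrib]
        exact Finset.sum_congr rfl fun x _ => hT.add_left _ _ _) with he₀def
  have he₀ : ∀ c : B → F, e₀ c = ∑ x : B, τ (c x) (Pi.single x (1 : R)) := fun _ => rfl
  have he₀single : ∀ (g : F) (x : B), e₀ (Pi.single x g) = τ g (Pi.single x (1 : R)) := by
    intro g x
    rw [he₀]
    refine (Finset.sum_eq_single x ?_ ?_).trans ?_
    · intro y _ hy
      rw [Pi.single_eq_of_ne hy, hτ0l]
    · intro h
      exact absurd (Finset.mem_univ x) h
    · rw [Pi.single_eq_same]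
  -- φ is a left inverse of e₀
  have hφe : ∀ c : B → F, φ (e₀ c) = c := by
    intro c
    rw [he₀, map_sum]
    funext y
    rw [Finset.sum_apply]
    have hterm : ∀ x : B, φ (τ (c x) (Pi.single x (1 : R))) y
        = if y = x then c y else 0 := by
      intro x
      rw [hφ]
      by_cases h : y = x <;> simp [Pi.single_apply, h, hact_one]
    rw [Finset.sum_congr rfl fun x _ => hterm x]
    simp
  -- φ is a right inverse of e₀
  have heφ : ∀ s : T, e₀ (φ s) = s := by
    intro s
    have hs : s ∈ AddSubgroup.closure {x : T | ∃ f n, τ f n = x} := by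
      rw [hT.span]; trivial
    induction hs using AddSubgroup.closure_induction with
    | mem x hx =>
        obtain ⟨f, n, rfl⟩ := hx
        rw [hφ f n, he₀]
        calc ∑ x : B, τ (act f (n x)) (Pi.single x (1 : R))
            = ∑ x : B, τ f (Pi.single x (n x)) :=
              Finset.sum_congr rfl fun x _ => hbal f (n x) x
          _ = τ f (∑ x : B, Pi.single x (n x)) := (hτsum f _).symm
          _ = τ f n := by rw [Finset.univ_sum_single]
    | zero => rw [map_zero, map_zero]
    | add x y _ _ hx hy => rw [map_add, map_add, hx, hy]
    | neg x _ hx => rw [map_neg, map_neg, hx]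
  -- D squares to zero on homogeneous generators
  have hDsq_single : ∀ i : ℤ, ∀ f ∈ ℱ i, ∀ x : B, D (D (Pi.single x f)) = 0 := by
    intro i f hf x
    have e2 : D (Pi.single x (dF f)) =
        (-(Int.negOnePow i : ℤ)) • fun y : B => act (dF f) (m x y) := by
      rw [hD (i - 1) (dF f) (hdF_mem i f hf) x, hdF_sq, Pi.single_zero, zero_add, hεsub1]
    have e3 : D (fun y : B => act f (m x y)) =
        (fun y : B => act (dF f) (m x y))
          + ∑ y : B, ((Int.negOnePow i : ℤ) • Pi.single y (act f (d (m x y)))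
            + (Int.negOnePow (i + (deg x - deg y - 1)) : ℤ) •
                fun z : B => act f (m x y * m y z)) := by
      have hg : (fun y : B => act f (m x y)) = ∑ y : B, Pi.single y (act f (m x y)) :=
        (Finset.univ_sum_single _).symm
      rw [hg, map_sum]
      have hterm : ∀ y : B, D (Pi.single y (act f (m x y)))
          = Pi.single y (act (dF f) (m x y))
            + ((Int.negOnePow i : ℤ) • Pi.single y (act f (d (m x y)))
              + (Int.negOnePow (i + (deg x - deg y - 1)) : ℤ) •
                  fun z : B => act f (m x y * m y z)) := by
        intro y
        have hmul : (fun z : B => act (act f (m x y)) (m y z))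
            = fun z : B => act f (m x y * m y z) := by
          funext z; exact hact_mul f (m x y) (m y z)
        rw [hD (i + (deg x - deg y - 1)) _ (hact_mem i _ f hf _ (hm_mem x y)) y,
          hact_leibniz i f hf (m x y), Pi.single_add, Pi.single_smul, hmul, add_assoc]
      rw [Finset.sum_congr rfl fun y _ => hterm y, Finset.sum_add_distrib,
        Finset.univ_sum_single]
    rw [hD i f hf x, map_add, map_zsmul, e2, e3, smul_add, Finset.smul_sum, neg_smul,
      neg_add_cancel_left]
    have hterm2 : ∀ y : B, (Int.negOnePow i : ℤ) •
        ((Int.negOnePow i : ℤ) • Pi.single y (act f (d (m x y)))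
          + (Int.negOnePow (i + (deg x - deg y - 1)) : ℤ) •
              fun z : B => act f (m x y * m y z))
        = Pi.single y (act f (d (m x y)))
          + (Int.negOnePow (deg x - deg y - 1) : ℤ) • fun z : B => act f (m x y * m y z) := by
      intro y
      rw [smul_add, smul_smul, smul_smul, hεsq, one_smul, hεcancel]
    rw [Finset.sum_congr rfl fun y _ => hterm2 y, Finset.sum_add_distrib]
    funext w
    rw [Pi.add_apply, Finset.sum_apply, Finset.sum_apply, Pi.zero_apply]
    have h1 : ∑ y : B, Pi.single y (act f (d (m x y))) w = act f (d (m x w)) := by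
      have := congrFun (Finset.univ_sum_single (fun y : B => act f (d (m x y)))) w
      rw [Finset.sum_apply] at this
      exact this
    rw [h1, hm_mc x w, map_sum]
    have h2 : ∀ z : B, act f ((Int.negOnePow (deg x - deg z) : ℤ) • (m x z * m z w))
        = (Int.negOnePow (deg x - deg z) : ℤ) • act f (m x z * m z w) := by
      intro z; exact map_zsmul (act f) _ _
    rw [Finset.sum_congr rfl fun z _ => h2 z]
    have h3 : ∀ y : B, ((Int.negOnePow (deg x - deg y - 1) : ℤ) •
        fun z : B => act f (m x y * m y z)) w
        = -((Int.negOnePow (deg x - deg y) : ℤ) • act f (m x y * m y w)) := by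
      intro y
      rw [Pi.smul_apply, hεsub1, neg_smul]
    rw [Finset.sum_congr rfl fun y _ => h3 y, ← Finset.sum_add_distrib]
    exact Finset.sum_eq_zero fun z _ => add_neg_cancel _
  -- D squares to zero
  have hDsq : ∀ c : B → F, D (D c) = 0 := by
    have hsing : ∀ f : F, ∀ x : B, D (D (Pi.single x f)) = 0 := by
      refine DirectSum.Decomposition.inductionOn ℱ
        (motive := fun f : F => ∀ x : B, D (D (Pi.single x f)) = 0) ?_ ?_ ?_
      · intro x; rw [Pi.single_zero, map_zero, map_zero]
      · intro i g x; exact hDsq_single i (g : F) g.2 x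
      · intro g g' hg hg' x
        rw [Pi.single_add, map_add, map_add, hg, hg', add_zero]
    intro c
    conv_lhs => rw [← Finset.univ_sum_single c]
    rw [map_sum, map_sum]
    exact Finset.sum_eq_zero fun x _ => hsing (c x) x
  -- the key computation on homogeneous generators
  have hkey : ∀ i : ℤ, ∀ f ∈ ℱ i, ∀ a : R, ∀ x : B,
      e₀ (D (fun y : B => act f ((Pi.single x a : B → R) y))) =
        τ (dF f) (Pi.single x a)
          + (Int.negOnePow i : ℤ) • τ f (dM (Pi.single x a)) := by
    intro i f hf
    refine DirectSum.Decomposition.inductionOn ℛ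
      (motive := fun a : R => ∀ x : B,
        e₀ (D (fun y : B => act f ((Pi.single x a : B → R) y))) =
          τ (dF f) (Pi.single x a)
            + (Int.negOnePow i : ℤ) • τ f (dM (Pi.single x a))) ?_ ?_ ?_
    · intro x
      have h0 : (fun y : B => act f ((Pi.single x (0 : R) : B → R) y)) = 0 := by
        funext y; rw [Pi.single_zero]; simp
      rw [h0, map_zero, map_zero, Pi.single_zero, map_zero, hτ0r, hτ0r, smul_zero, add_zero]
    · rintro j ⟨a, ha⟩ x
      show e₀ (D (fun y : B => act f ((Pi.single x a : B → R) y))) = _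
      have hfs : (fun y : B => act f ((Pi.single x a : B → R) y)) = Pi.single x (act f a) := by
        funext y
        by_cases h : y = x <;> simp [Pi.single_apply, h]
      have hmul : (fun y : B => act (act f a) (m x y)) = fun y : B => act f (a * m x y) := by
        funext y; exact hact_mul f a (m x y)
      rw [hfs, hD (i + j) _ (hact_mem i j f hf a ha) x, map_add, map_zsmul,
        hact_leibniz i f hf a, Pi.single_add, Pi.single_smul, map_add, map_zsmul,
        he₀single, he₀single, hmul, he₀, hbal, hbal]
      have h4 : ∑ y : B, τ ((fun y : B => act f (a * m x y)) y) (Pi.single y (1 : R))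
          = τ f (fun y : B => a * m x y) := by
        calc ∑ y : B, τ (act f (a * m x y)) (Pi.single y (1 : R))
            = ∑ y : B, τ f (Pi.single y (a * m x y)) :=
              Finset.sum_congr rfl fun y _ => hbal f (a * m x y) y
          _ = τ f (∑ y : B, Pi.single y (a * m x y)) := (hτsum f _).symm
          _ = τ f (fun y : B => a * m x y) := by rw [Finset.univ_sum_single]
      rw [h4, hdM j a ha x, hτaddr, hτzsmul, smul_add, smul_smul, ← hεadd, add_assoc]
    · intro a a' ha ha' x
      have hsplit : (fun y : B => act f ((Pi.single x (a + a') : B → R) y))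
          = (fun y : B => act f ((Pi.single x a : B → R) y)) + fun y : B => act f ((Pi.single x a' : B → R) y) := by
        funext y
        rw [Pi.single_add, Pi.add_apply, map_add, Pi.add_apply]
      rw [hsplit, map_add, map_add, ha x, ha' x, Pi.single_add, hτaddr, map_add, hτaddr,
        smul_add]
      abel
  -- the key computation in general
  have hmain : ∀ i : ℤ, ∀ f ∈ ℱ i, ∀ c : B → R,
      e₀ (D (fun x : B => act f (c x))) =
        τ (dF f) c + (Int.negOnePow i : ℤ) • τ f (dM c) := by
    intro i f hf c
    have hc : (fun x : B => act f (c x))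
        = ∑ x : B, fun y : B => act f ((Pi.single x (c x) : B → R) y) := by
      funext y
      rw [Finset.sum_apply]
      calc act f (c y) = act f ((∑ x : B, Pi.single x (c x)) y) := by
            rw [Finset.univ_sum_single]
        _ = ∑ x : B, act f ((Pi.single x (c x) : B → R) y) := by rw [Finset.sum_apply, map_sum]
    rw [hc, map_sum, map_sum, Finset.sum_congr rfl fun x _ => hkey i f hf (c x) x,
      Finset.sum_add_distrib]
    congr 1
    · rw [← hτsum, Finset.univ_sum_single]
    · rw [← Finset.smul_sum, ← hτsum, ← map_sum, Finset.univ_sum_single]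
  -- assemble everything
  refine ⟨e₀.comp (D.toAddMonoidHom.comp φ), ?_, ?_,
    ⟨{ toFun := e₀, invFun := φ, left_inv := hφe, right_inv := heφ,
       map_add' := e₀.map_add }, ?_, ?_⟩⟩
  · intro s
    show e₀ (D (φ (e₀ (D (φ s))))) = 0
    rw [hφe, hDsq, map_zero]
  · intro i f hf c
    show e₀ (D (φ (τ f c))) = _
    rw [hφ f c]
    exact hmain i f hf c
  · intro f x
    exact he₀single f x
  · intro c
    show e₀ (D c) = e₀ (D (φ (e₀ c)))
    rw [hφe]
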